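/- Let u₀ : [0,∞) → ℝ be a C² solution of -u₀'' = f(u₀) with u₀(0) = 0, where f : [0,∞) → ℝ is continuous, and suppose there exist constants A > 0 and B ≥ 0 such that f(t) ≥ A·t - B for all t ≥ 0. Then u₀ is bounded on [0,∞). -/

import Mathlib

open Set Filter

/-- If u₀ is a nonnegative C² solution of -u₀'' = f(u₀) on (0,∞) with
u₀(0) = 0, where f is continuous and f(t) ≥ A·t - B with A > 0, B ≥ 0, then u₀ is
bounded on [0,∞). -/
theorem stmt1 (f : ℝ → ℝ) (hf : ContinuousOn f (Ici 0))
    (A B : ℝ) (hA : 0 < A) (hB : 0 ≤ B)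
    (hlin : ∀ t : ℝ, 0 ≤ t → A * t - B ≤ f t)
    (u₀ : ℝ → ℝ) (hu₀ : ContDiffOn ℝ 2 u₀ (Ici 0))
    (hval : ∀ t ∈ Ici (0:ℝ), 0 ≤ u₀ t)
    (hode : ∀ t ∈ Ioi (0:ℝ), - deriv (deriv u₀) t = f (u₀ t))
    (hzero : u₀ 0 = 0) :
    ∃ M : ℝ, ∀ t ∈ Ici (0:ℝ), u₀ t ≤ M := by
  classical
  -- extend f continuously to all of ℝ
  set g : ℝ → ℝ := fun x => f (max x 0) with hg
  have hgc : Continuous g :=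
    hf.comp_continuous (continuous_id.max continuous_const) fun x => le_max_right x 0
  -- antiderivative of g
  set F : ℝ → ℝ := fun x => ∫ s in (0:ℝ)..x, g s with hFdef
  have hFd : ∀ x : ℝ, HasDerivAt F (g x) x := fun x =>
    (hgc.integral_hasStrictDerivAt 0 x).hasDerivAt
  -- lower bound on F
  have hFlb : ∀ u : ℝ, 0 ≤ u → A * u ^ 2 / 2 - B * u ≤ F u := by
    intro u hu
    have h1 : (∫ s in (0:ℝ)..u, (A * s - B)) ≤ ∫ s in (0:ℝ)..u, g s := by
      apply intervalIntegral.integral_mono_on hu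
      · exact ((continuous_const.mul continuous_id).sub continuous_const).intervalIntegrable 0 u
      · exact hgc.intervalIntegrable 0 u
      · intro x hx
        have hx0 : (0:ℝ) ≤ x := hx.1
        have := hlin x hx0
        simpa [hg, max_eq_left hx0] using this
    have h2 : (∫ s in (0:ℝ)..u, (A * s - B)) = A * u ^ 2 / 2 - B * u := by
      rw [intervalIntegral.integral_sub, intervalIntegral.integral_const_mul,
        integral_id, intervalIntegral.integral_const]
      · simp [smul_eq_mul]; ring
      · exact ((continuous_const.mul continuous_id)).intervalIntegrable 0 u
      · exact continuous_const.intervalIntegrable 0 u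
    calc A * u ^ 2 / 2 - B * u = ∫ s in (0:ℝ)..u, (A * s - B) := h2.symm
      _ ≤ ∫ s in (0:ℝ)..u, g s := h1
  -- energy
  set E : ℝ → ℝ := fun t => (deriv u₀ t) ^ 2 / 2 + F (u₀ t) with hE
  have hu2 : ContDiffOn ℝ 2 u₀ (Ioi 0) := hu₀.mono Ioi_subset_Ici_self
  have hd1 : DifferentiableOn ℝ u₀ (Ioi 0) := hu2.differentiableOn (by norm_num)
  have hd2' : ContDiffOn ℝ 1 (deriv u₀) (Ioi 0) :=
    hu2.deriv_of_isOpen isOpen_Ioi (by norm_num)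
  have hd2 : DifferentiableOn ℝ (deriv u₀) (Ioi 0) := hd2'.differentiableOn (by norm_num)
  have hEd : ∀ t ∈ Ioi (0:ℝ), HasDerivAt E 0 t := by
    intro t ht
    have h1 : HasDerivAt u₀ (deriv u₀ t) t :=
      ((hd1 t ht).differentiableAt (isOpen_Ioi.mem_nhds ht)).hasDerivAt
    have h2 : HasDerivAt (deriv u₀) (deriv (deriv u₀) t) t :=
      ((hd2 t ht).differentiableAt (isOpen_Ioi.mem_nhds ht)).hasDerivAt
    have hterm1 : HasDerivAt (fun s => (deriv u₀ s) ^ 2 / 2)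
        ((2 * deriv u₀ t ^ 1 * deriv (deriv u₀) t) / 2) t := (h2.pow 2).div_const 2
    have hterm2 : HasDerivAt (fun s => F (u₀ s)) (g (u₀ t) * deriv u₀ t) t :=
      (hFd (u₀ t)).comp t h1
    have hgu : g (u₀ t) = f (u₀ t) := by
      have : (0:ℝ) ≤ u₀ t := hval t (Set.mem_Ici.mpr (le_of_lt ht))
      simp [hg, max_eq_left this]
    have hfu : f (u₀ t) = - deriv (deriv u₀) t := (hode t ht).symm
    have := hterm1.add hterm2
    refine this.congr_deriv ?_
    rw [hgu, hfu]; ring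
  -- E is constant on (0, ∞)
  have hEconst : ∀ t ∈ Ioi (0:ℝ), E t = E 1 := by
    intro t ht
    rcases le_total 1 t with h | h
    · have := constant_of_has_deriv_right_zero
        (f := E) (a := 1) (b := t)
        (fun x hx => (hEd x (lt_of_lt_of_le one_pos hx.1)).continuousAt.continuousWithinAt)
        (fun x hx => (hEd x (lt_of_lt_of_le one_pos hx.1)).hasDerivWithinAt)
      exact this t ⟨h, le_refl t⟩
    · have := constant_of_has_deriv_right_zero
        (f := E) (a := t) (b := 1)
        (fun x hx => (hEd x (lt_of_lt_of_le ht hx.1)).continuousAt.continuousWithinAt)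
        (fun x hx => (hEd x (lt_of_lt_of_le ht hx.1)).hasDerivWithinAt)
      exact (this 1 ⟨h, le_refl 1⟩).symm
  set C : ℝ := E 1 with hC
  clear_value g F E C
  refine ⟨max 1 (2 * (B + |C| + 1) / A), ?_⟩
  intro t ht
  rcases eq_or_lt_of_le (Set.mem_Ici.mp ht) with h0 | h0
  · rw [← h0, hzero]
    exact le_trans zero_le_one (le_max_left _ _)
  · -- t > 0
    have hu : (0:ℝ) ≤ u₀ t := hval t ht
    have key : A * (u₀ t) ^ 2 / 2 - B * (u₀ t) ≤ C := by
      have h1 : F (u₀ t) ≤ E t := by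
        have : (0:ℝ) ≤ (deriv u₀ t) ^ 2 / 2 := by positivity
        simp only [hE]; linarith
      have h2 := hFlb (u₀ t) hu
      have h3 : E t = C := hEconst t h0
      linarith
    by_contra hcon
    push_neg at hcon
    have hM1 : (1:ℝ) < u₀ t := lt_of_le_of_lt (le_max_left _ _) hcon
    have hM2 : 2 * (B + |C| + 1) / A < u₀ t := lt_of_le_of_lt (le_max_right _ _) hcon
    have hM2' : 2 * (B + |C| + 1) < A * u₀ t := by
      rw [div_lt_iff₀ hA] at hM2; linarith
    have hCabs : C ≤ |C| := le_abs_self C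
    have habs : (0:ℝ) ≤ |C| := abs_nonneg C
    have h3 : 0 < u₀ t - 1 := by linarith
    have h4 : 0 < A * u₀ t - 2*B - 2*|C| - 2 := by linarith
    nlinarith [mul_pos h3 h4, mul_nonneg habs h3.le]
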